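/- Let f_m, f : ℝ^n → ℝ (m ∈ ℕ) be real-valued convex functions and suppose the sequence (f_m) converges to f in the Kuratowski (epigraphical) sense, i.e.: (a) for every x ∈ ℝ^n and every sequence x_m → x, liminf_{m→∞} f_m(x_m) ≥ f(x); and (b) for every x ∈ ℝ^n there exists a sequence x_m → x with limsup_{m→∞} f_m(x_m) ≤ f(x). Then f_m converges to f pointwise on ℝ^n. -/

import Mathlib

open Filter Topology Matrix

private lemma sum_ite_coe {n : ℕ} (j : Fin n) (r : Fin (n + 1) → ℝ) :
    ∑ i : Fin (n + 1), (if (j : ℕ) = (i : ℕ) then r i else 0) = r j.castSucc := by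
  have h : ∀ i : Fin (n + 1), ((j : ℕ) = (i : ℕ)) = (j.castSucc = i) := by
    intro i
    simp [Fin.ext_iff]
  simp only [h]
  simp

/-- If real-valued convex functions `f_m` converge to the convex function
`f` in the Kuratowski (epigraphical) sense — (a) `liminf f_m(x_m) ≥ f(x)` along every
sequence `x_m → x`, and (b) for each `x` there is a sequence `x_m → x` with
`limsup f_m(x_m) ≤ f(x)` — then `f_m → f` pointwise on `ℝⁿ`. -/
theorem stmt12 {n : ℕ} (f : ℕ → (Fin n → ℝ) → ℝ) (g : (Fin n → ℝ) → ℝ)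
    (hf : ∀ m, ConvexOn ℝ Set.univ (f m))
    (hg : ConvexOn ℝ Set.univ g)
    (ha : ∀ (x : Fin n → ℝ) (xs : ℕ → Fin n → ℝ), Tendsto xs atTop (𝓝 x) →
      ((g x : ℝ) : EReal) ≤ Filter.liminf (fun m => ((f m (xs m) : ℝ) : EReal)) atTop)
    (hb : ∀ x : Fin n → ℝ, ∃ xs : ℕ → Fin n → ℝ, Tendsto xs atTop (𝓝 x) ∧
      Filter.limsup (fun m => ((f m (xs m) : ℝ) : EReal)) atTop ≤ ((g x : ℝ) : EReal)) :
    ∀ x, Tendsto (fun m => f m x) atTop (𝓝 (g x)) := by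
  intro x
  have hn1 : (0:ℝ) < (n:ℝ) + 1 := by positivity
  rw [tendsto_order]
  constructor
  · -- lower bound: easy from (a) with the constant sequence
    intro c hc
    have hlow : ((g x : ℝ) : EReal) ≤ liminf (fun m => ((f m x : ℝ) : EReal)) atTop :=
      ha x (fun _ => x) tendsto_const_nhds
    have h1 : ((c : ℝ) : EReal) < liminf (fun m => ((f m x : ℝ) : EReal)) atTop :=
      lt_of_lt_of_le (by exact_mod_cast hc) hlow
    filter_upwards [eventually_lt_of_lt_liminf h1] with m hm
    exact_mod_cast hm
  · -- upper bound: the main part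
    intro c hc
    have hgc : Continuous g := continuousOn_univ.mp
      (hg.continuousOn isOpen_univ)
    -- perturbed vertices
    set v : ℝ → Fin (n + 1) → (Fin n → ℝ) :=
      fun e i j => x j + ((if (j : ℕ) = (i : ℕ) then ((n : ℝ) + 1) * e else 0) - e) with hvdef
    set G : ℝ → ℝ := fun e => (∑ i : Fin (n + 1), g (v e i)) / ((n : ℝ) + 1) with hGdef
    have hv0 : ∀ i, v 0 i = x := by
      intro i; funext j; simp [hvdef]
    have hG0 : G 0 = g x := by
      simp only [hGdef, hv0, Finset.sum_const, Finset.card_univ, Fintype.card_fin,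
        nsmul_eq_mul]
      field_simp
      push_cast; ring
    have hvc : ∀ i, Continuous fun e => v e i := by
      intro i
      apply continuous_pi
      intro j
      by_cases hji : (j : ℕ) = (i : ℕ) <;> simp only [hvdef, hji, if_true, if_false] <;> fun_prop
    have hGc : Continuous G :=
      (continuous_finset_sum _ fun i _ => hgc.comp (hvc i)).div_const _
    have hev : ∀ᶠ e in 𝓝 (0:ℝ), G e < c :=
      (hGc.tendsto 0).eventually_lt_const (by rw [hG0]; exact hc)
    obtain ⟨r, hr, hball⟩ := Metric.eventually_nhds_iff.mp hev
    set ε : ℝ := r / 2 with hεdef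
    have hε : 0 < ε := by positivity
    have hGε : G ε < c := hball (by
      rw [Real.dist_eq, sub_zero, abs_of_pos hε]
      simp only [hεdef]; linarith)
    set δ : ℝ := (c - G ε) / 2 with hδdef
    have hδ : 0 < δ := by simp only [hδdef]; linarith
    -- recovery sequences at the vertices
    choose xs hxs hxl using fun i : Fin (n + 1) => hb (v ε i)
    -- matrices
    set M : Matrix (Fin (n + 1)) (Fin (n + 1)) ℝ :=
      Matrix.of fun p i => if h : (p : ℕ) < n then v ε i ⟨(p : ℕ), h⟩ else 1 with hMdef
    set A : ℕ → Matrix (Fin (n + 1)) (Fin (n + 1)) ℝ :=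
      fun m => Matrix.of fun p i => if h : (p : ℕ) < n then xs i m ⟨(p : ℕ), h⟩ else 1 with hAdef
    set bv : Fin (n + 1) → ℝ :=
      fun p => if h : (p : ℕ) < n then x ⟨(p : ℕ), h⟩ else 1 with hbvdef
    have hcsp : ∀ j : Fin n, ((j.castSucc : Fin (n + 1)) : ℕ) < n := by
      intro j; simpa using j.isLt
    have hcs_eq : ∀ j : Fin n, (⟨((j.castSucc : Fin (n + 1)) : ℕ), hcsp j⟩ : Fin n) = j := by
      intro j; apply Fin.ext; simp
    have hlastp : ¬ (((Fin.last n) : ℕ) < n) := by simp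
    -- kernel of M is trivial
    have hker : ∀ w : Fin (n + 1) → ℝ, M *ᵥ w = 0 → w = 0 := by
      intro w hw
      have hsum : ∑ i, w i = 0 := by
        have h := congrFun hw (Fin.last n)
        simpa [Matrix.mulVec, dotProduct, hMdef, hlastp] using h
      have hcs : ∀ j : Fin n, w j.castSucc = 0 := by
        intro j
        have h1 := congrFun hw j.castSucc
        simp only [Matrix.mulVec, dotProduct, hMdef, Matrix.of_apply,
          dif_pos (hcsp j), hcs_eq j, Pi.zero_apply] at h1
        have hexp : ∀ i : Fin (n + 1), v ε i j * w i
            = (x j - ε) * w i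
              + (if (j : ℕ) = (i : ℕ) then (((n : ℝ) + 1) * ε) * w i else 0) := by
          intro i; simp only [hvdef]; split_ifs <;> ring
        rw [Finset.sum_congr rfl fun i _ => hexp i, Finset.sum_add_distrib,
          ← Finset.mul_sum, hsum, mul_zero, zero_add,
          sum_ite_coe j (fun i => (((n : ℝ) + 1) * ε) * w i)] at h1
        have hne : ((n : ℝ) + 1) * ε ≠ 0 := by positivity
        exact (mul_eq_zero.mp h1).resolve_left hne
      funext i
      simp only [Pi.zero_apply]
      induction i using Fin.lastCases with
      | last =>
        rw [Fin.sum_univ_castSucc] at hsum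
        simpa [hcs] using hsum
      | cast j => exact hcs j
    have hdet : M.det ≠ 0 := by
      intro h
      obtain ⟨w, hw0, hww⟩ := (Matrix.exists_mulVec_eq_zero_iff).mpr h
      exact hw0 (hker w hww)
    -- convergence of the matrices
    have hA : Tendsto A atTop (𝓝 M) := by
      refine tendsto_pi_nhds.mpr ?_; intro p; rw [tendsto_pi_nhds]; intro i
      by_cases hp : (p : ℕ) < n
      · simpa [hAdef, hMdef, dif_pos hp] using (tendsto_pi_nhds.mp (hxs i)) ⟨(p : ℕ), hp⟩
      · simpa [hAdef, hMdef, dif_neg hp] using tendsto_const_nhds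
    have hdetA : Tendsto (fun m => (A m).det) atTop (𝓝 M.det) :=
      ((continuous_id.matrix_det).tendsto M).comp hA
    have hadjA : Tendsto (fun m => (A m).adjugate *ᵥ bv) atTop (𝓝 (M.adjugate *ᵥ bv)) :=
      (((continuous_id.matrix_adjugate).matrix_mulVec continuous_const).tendsto M).comp hA
    set lam : ℕ → Fin (n + 1) → ℝ :=
      fun m => ((A m).det)⁻¹ • ((A m).adjugate *ᵥ bv) with hlamdef
    set lamI : Fin (n + 1) → ℝ := (M.det)⁻¹ • (M.adjugate *ᵥ bv) with hlamIdef
    have hlamT : Tendsto lam atTop (𝓝 lamI) := (hdetA.inv₀ hdet).smul hadjA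
    have hsolve : ∀ B : Matrix (Fin (n + 1)) (Fin (n + 1)) ℝ, B.det ≠ 0 →
        B *ᵥ ((B.det)⁻¹ • (B.adjugate *ᵥ bv)) = bv := by
      intro B hB
      rw [Matrix.mulVec_smul, ← Matrix.cramer_eq_adjugate_mulVec, Matrix.mulVec_cramer,
        smul_smul, inv_mul_cancel₀ hB, one_smul]
    -- the limit coefficients are all 1/(n+1)
    have hM0 : M *ᵥ (fun _ => 1 / ((n : ℝ) + 1)) = bv := by
      funext p
      simp only [Matrix.mulVec, dotProduct, hMdef, Matrix.of_apply, hbvdef]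
      by_cases hp : (p : ℕ) < n
      · rw [dif_pos hp]
        rw [Finset.sum_congr rfl fun i _ => by rw [dif_pos hp]]
        have hexp : ∀ i : Fin (n + 1), v ε i ⟨(p : ℕ), hp⟩ * (1 / ((n : ℝ) + 1))
            = (x ⟨(p : ℕ), hp⟩ - ε) * (1 / ((n : ℝ) + 1))
              + (if ((⟨(p : ℕ), hp⟩ : Fin n) : ℕ) = (i : ℕ) then
                  (((n : ℝ) + 1) * ε) * (1 / ((n : ℝ) + 1)) else 0) := by
          intro i; simp only [hvdef]; split_ifs <;> ring
        rw [Finset.sum_congr rfl fun i _ => hexp i, Finset.sum_add_distrib,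
          sum_ite_coe (⟨(p : ℕ), hp⟩ : Fin n)
            (fun _ => (((n : ℝ) + 1) * ε) * (1 / ((n : ℝ) + 1))),
          Finset.sum_const, Finset.card_univ, Fintype.card_fin, nsmul_eq_mul]
        push_cast
        field_simp
        try ring
      · rw [dif_neg hp]
        rw [Finset.sum_congr rfl fun i _ => by rw [dif_neg hp]]
        simp only [one_mul, Finset.sum_const, Finset.card_univ, Fintype.card_fin, nsmul_eq_mul]
        push_cast
        field_simp
    have hlamI : lamI = fun _ => 1 / ((n : ℝ) + 1) := by
      have h0 : M *ᵥ (lamI - fun _ => 1 / ((n : ℝ) + 1)) = 0 := by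
        rw [Matrix.mulVec_sub, hsolve M hdet, hM0, sub_self]
      have h1 := hker _ h0
      funext i
      have h2 := congrFun h1 i
      simp only [Pi.sub_apply, Pi.zero_apply, sub_eq_zero] at h2
      exact h2
    have hlamTi : ∀ i, Tendsto (fun m => lam m i) atTop (𝓝 (1 / ((n : ℝ) + 1))) := by
      intro i
      have h1 := tendsto_pi_nhds.mp hlamT i
      rwa [hlamI] at h1
    -- eventual properties
    have hdetne : ∀ᶠ m in atTop, (A m).det ≠ 0 := hdetA.eventually_ne hdet
    have hsum1 : ∀ᶠ m in atTop, ∑ i, lam m i = 1 := by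
      filter_upwards [hdetne] with m hm
      have h := congrFun (hsolve (A m) hm) (Fin.last n)
      simpa [Matrix.mulVec, dotProduct, hAdef, hbvdef, hlastp, hlamdef] using h
    have hcomb : ∀ᶠ m in atTop, ∑ i, lam m i • xs i m = x := by
      filter_upwards [hdetne] with m hm
      funext j
      have h := congrFun (hsolve (A m) hm) j.castSucc
      simp only [Matrix.mulVec, dotProduct, hAdef, Matrix.of_apply,
        dif_pos (hcsp j), hcs_eq j, hbvdef] at h
      rw [Finset.sum_apply]
      simp only [Pi.smul_apply, smul_eq_mul]
      rw [Finset.sum_congr rfl fun i _ => mul_comm (lam m i) (xs i m j)]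
      exact h
    have hpos : ∀ᶠ m in atTop, ∀ i, 0 ≤ lam m i := by
      rw [eventually_all]
      intro i
      filter_upwards [(hlamTi i).eventually_const_lt
        (show (0:ℝ) < 1 / ((n : ℝ) + 1) by positivity)] with m hm
      exact hm.le
    have hub : ∀ᶠ m in atTop, ∀ i, f m (xs i m) < g (v ε i) + δ := by
      rw [eventually_all]
      intro i
      have hlt : limsup (fun m => ((f m (xs i m) : ℝ) : EReal)) atTop
          < ((g (v ε i) + δ : ℝ) : EReal) :=
        lt_of_le_of_lt (hxl i) (by exact_mod_cast (lt_add_of_pos_right _ hδ))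
      filter_upwards [eventually_lt_of_limsup_lt hlt] with m hm
      exact_mod_cast hm
    -- the dominating sums
    set S : ℕ → ℝ := fun m => ∑ i, lam m i * (g (v ε i) + δ) with hSdef
    have hS : Tendsto S atTop
        (𝓝 (∑ i : Fin (n + 1), (1 / ((n : ℝ) + 1)) * (g (v ε i) + δ))) :=
      tendsto_finset_sum _ fun i _ => (hlamTi i).mul_const _
    have hlim_lt : (∑ i : Fin (n + 1), (1 / ((n : ℝ) + 1)) * (g (v ε i) + δ)) < c := by
      rw [← Finset.mul_sum, Finset.sum_add_distrib, Finset.sum_const, Finset.card_univ,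
        Fintype.card_fin, nsmul_eq_mul]
      have hGeq : G ε = (∑ i : Fin (n + 1), g (v ε i)) / ((n : ℝ) + 1) := rfl
      have h2 : (∑ i : Fin (n + 1), g (v ε i)) = G ε * ((n : ℝ) + 1) := by
        rw [hGeq]; field_simp
      rw [h2]
      push_cast
      have : 1 / ((n : ℝ) + 1) * (G ε * ((n : ℝ) + 1) + ((n : ℝ) + 1) * δ) = G ε + δ := by
        field_simp
      rw [this, hδdef]
      linarith
    filter_upwards [hsum1, hcomb, hpos, hub, hS.eventually_lt_const hlim_lt]
      with m h1 h2 h3 h4 h5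
    calc f m x = f m (∑ i, lam m i • xs i m) := by rw [h2]
      _ ≤ ∑ i, lam m i • f m (xs i m) :=
          (hf m).map_sum_le (fun i _ => h3 i) h1 (fun i _ => Set.mem_univ _)
      _ ≤ S m := by
          apply Finset.sum_le_sum
          intro i _
          rw [smul_eq_mul]
          exact mul_le_mul_of_nonneg_left (h4 i).le (h3 i)
      _ < c := h5
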